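/- For the binary two-component channel example, there exists a choice of auxiliary random variables and deterministic maps of the required form achieving min{I(U,V;Y), I(U;X|V,T)} ≥ 5/3 bits; namely, taking α = 1/3 in the construction U = (A,Ũ) uniform, σ ~ Bernoulli(1/3), Ṽ = A·σ, V = (Ṽ,σ), T = S⁽Ṽ⁾, X = (A, Ũ ⊕ T) yields I(U,V;Y) ≥ 5/3 and I(U;X|V,T) = 5/3. Since 5/3 > log₂ 3, the achievable value exceeds log₂ 3. -/
import Mathlib


open scoped BigOperators Classical
open Real Finset

noncomputable section

/-- A probability mass function on a finite sample space. -/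
structure FinProb (Ω : Type*) [Fintype Ω] where
  p : Ω → ℝ
  nonneg : ∀ ω, 0 ≤ p ω
  sum_one : ∑ ω, p ω = 1

namespace FinProb

variable {Ω : Type*} [Fintype Ω]

/-- Probability of an event. -/
def pr (μ : FinProb Ω) (E : Ω → Prop) : ℝ := ∑ ω, if E ω then μ.p ω else 0

/-- Distribution of a random variable. -/
def dist (μ : FinProb Ω) {α : Type*} [Fintype α] (X : Ω → α) (x : α) : ℝ :=
  μ.pr (fun ω => X ω = x)

/-- Shannon entropy (in bits) of a finite random variable. -/
def H (μ : FinProb Ω) {α : Type*} [Fintype α] (X : Ω → α) : ℝ :=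
  ∑ x, -(μ.dist X x) * Real.logb 2 (μ.dist X x)

/-- Joint entropy H(X,Y). -/
def H2 (μ : FinProb Ω) {α β : Type*} [Fintype α] [Fintype β] (X : Ω → α) (Y : Ω → β) : ℝ :=
  μ.H (fun ω => (X ω, Y ω))

/-- Conditional entropy H(X|Y). -/
def condH (μ : FinProb Ω) {α β : Type*} [Fintype α] [Fintype β] (X : Ω → α) (Y : Ω → β) : ℝ :=
  μ.H2 X Y - μ.H Y

/-- Mutual information I(X;Y) in bits. -/
def mi (μ : FinProb Ω) {α β : Type*} [Fintype α] [Fintype β] (X : Ω → α) (Y : Ω → β) : ℝ :=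
  μ.H X + μ.H Y - μ.H2 X Y

/-- Conditional mutual information I(X;Y|Z) in bits. -/
def cmi (μ : FinProb Ω) {α β γ : Type*} [Fintype α] [Fintype β] [Fintype γ]
    (X : Ω → α) (Y : Ω → β) (Z : Ω → γ) : ℝ :=
  μ.H2 X Z + μ.H2 Y Z - μ.H (fun ω => (X ω, Y ω, Z ω)) - μ.H Z

/-- Conditional probability of event `A` given event `E`. -/
def cpr (μ : FinProb Ω) (A E : Ω → Prop) : ℝ :=
  μ.pr (fun ω => A ω ∧ E ω) / μ.pr E

/-- Conditional distribution of `X` given the event `E`. -/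
def distCond (μ : FinProb Ω) {α : Type*} [Fintype α] (X : Ω → α) (E : Ω → Prop) (x : α) : ℝ :=
  μ.cpr (fun ω => X ω = x) E

/-- Entropy of `X` under the conditional distribution given the event `E`. -/
def entCond (μ : FinProb Ω) {α : Type*} [Fintype α] (X : Ω → α) (E : Ω → Prop) : ℝ :=
  ∑ x, -(μ.distCond X E x) * Real.logb 2 (μ.distCond X E x)

/-- Conditional entropy H(X | T, E): entropy of `X` given the random variable `T`,
all within the event `E` (averaged over `T` with conditional weights). -/
def condHOn (μ : FinProb Ω) {α β : Type*} [Fintype α] [Fintype β]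
    (X : Ω → α) (T : Ω → β) (E : Ω → Prop) : ℝ :=
  ∑ t, μ.cpr (fun ω => T ω = t) E * μ.entCond X (fun ω => T ω = t ∧ E ω)

end FinProb
section Helpers
variable {Ω : Type} [Fintype Ω]

lemma pr_congr' (μ : FinProb Ω) {E E' : Ω → Prop} (h : ∀ ω, E ω ↔ E' ω) :
    μ.pr E = μ.pr E' := by
  unfold FinProb.pr
  exact Finset.sum_congr rfl fun ω _ => if_congr (h ω) rfl rfl

lemma pr_comp' (μ : FinProb Ω) {Θ : Type} [Fintype Θ] (W : Ω → Θ) (F : Θ → Prop) :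
    μ.pr (fun ω => F (W ω)) = ∑ w, if F w then μ.pr (fun ω => W ω = w) else 0 := by
  unfold FinProb.pr
  have h1 : ∀ ω, (if F (W ω) then μ.p ω else 0)
      = ∑ w : Θ, if W ω = w ∧ F w then μ.p ω else 0 := by
    intro ω
    rw [Finset.sum_eq_single (W ω)]
    · simp
    · intro w _ hw; exact if_neg (fun h => hw h.1.symm)
    · intro h; exact absurd (Finset.mem_univ _) h
  simp only [h1]
  rw [Finset.sum_comm]
  refine Finset.sum_congr rfl fun w _ => ?_
  by_cases hF : F w
  · simp [hF]
  · simp [hF]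

end Helpers
section Aux

/-- auxiliary maps on the base sample tuple -/
def gVt (w : Bool × Bool × Bool × (Bool × Bool)) : Bool := if w.2.2.1 then w.1 else false
def gT (w : Bool × Bool × Bool × (Bool × Bool)) : Bool :=
  if gVt w then w.2.2.2.2 else w.2.2.2.1
def gU (w : Bool × Bool × Bool × (Bool × Bool)) : Bool × Bool := (w.1, w.2.1)
def gX (w : Bool × Bool × Bool × (Bool × Bool)) : Bool × Bool := (w.1, xor w.2.1 (gT w))
def gY (w : Bool × Bool × Bool × (Bool × Bool)) : Bool × Bool :=
  (w.1, xor (gX w).2 (if w.1 then w.2.2.2.2 else w.2.2.2.1))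
def gUV (w : Bool × Bool × Bool × (Bool × Bool)) : (Bool × Bool) × (Bool × Bool) :=
  (gU w, (gVt w, w.2.2.1))
def gZ (w : Bool × Bool × Bool × (Bool × Bool)) : (Bool × Bool) × Bool :=
  ((gVt w, w.2.2.1), gT w)

lemma lb2self : Real.logb 2 (2:ℝ) = 1 := Real.logb_self_eq_one (by norm_num)

lemma lb4 : Real.logb 2 (1/4:ℝ) = -2 := by
  rw [show (1/4:ℝ) = ((2:ℝ)^2)⁻¹ by norm_num, Real.logb_inv, Real.logb_pow, lb2self]; ring

lemma lb3 : Real.logb 2 (1/3:ℝ) = -Real.logb 2 3 := by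
  rw [show (1/3:ℝ) = ((3:ℝ))⁻¹ by norm_num, Real.logb_inv]

lemma lb6 : Real.logb 2 (1/6:ℝ) = -(1 + Real.logb 2 3) := by
  rw [show (1/6:ℝ) = ((2:ℝ)*3)⁻¹ by norm_num, Real.logb_inv,
    Real.logb_mul (by norm_num) (by norm_num), lb2self]

lemma lb12 : Real.logb 2 (1/12:ℝ) = -(2 + Real.logb 2 3) := by
  rw [show (1/12:ℝ) = ((2:ℝ)^2*3)⁻¹ by norm_num, Real.logb_inv,
    Real.logb_mul (by positivity) (by norm_num), Real.logb_pow, lb2self]; ring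

lemma lb24 : Real.logb 2 (1/24:ℝ) = -(3 + Real.logb 2 3) := by
  rw [show (1/24:ℝ) = ((2:ℝ)^3*3)⁻¹ by norm_num, Real.logb_inv,
    Real.logb_mul (by positivity) (by norm_num), Real.logb_pow, lb2self]; ring

lemma lblt : Real.logb 2 3 < 5/3 := by
  rw [Real.logb, div_lt_iff₀ (Real.log_pos one_lt_two)]
  have h1 : Real.log 27 < Real.log 32 := Real.log_lt_log (by norm_num) (by norm_num)
  rw [show (27:ℝ) = 3^3 by norm_num, show (32:ℝ)=2^5 by norm_num,
    Real.log_pow, Real.log_pow] at h1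
  push_cast at h1; linarith

end Aux
set_option maxHeartbeats 4000000 in
/-- Taking `α = 1/3` in the construction yields
`min{I(U,V;Y), I(U;X|V,T)} ≥ 5/3` bits, and `5/3 > log₂ 3`. -/
theorem stmt6 {Ω : Type} [Fintype Ω] (μ : FinProb Ω)
    (A Ut σv : Ω → Bool) (S : Ω → Bool × Bool)
    (hjoint : ∀ (a u b : Bool) (s : Bool × Bool),
      μ.pr (fun ω => A ω = a ∧ Ut ω = u ∧ σv ω = b ∧ S ω = s)
        = 1 / 4 * (if b then (1 / 3 : ℝ) else 1 - 1 / 3) * (1 / 4)) :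
    let Vt : Ω → Bool := fun ω => if σv ω then A ω else false
    let T : Ω → Bool := fun ω => if Vt ω then (S ω).2 else (S ω).1
    let X : Ω → Bool × Bool := fun ω => (A ω, xor (Ut ω) (T ω))
    let Y : Ω → Bool × Bool :=
      fun ω => (A ω, xor (X ω).2 (if A ω then (S ω).2 else (S ω).1))
    (5 / 3 : ℝ) ≤ min (μ.mi (fun ω => ((A ω, Ut ω), (Vt ω, σv ω))) Y)
        (μ.cmi (fun ω => (A ω, Ut ω)) X (fun ω => ((Vt ω, σv ω), T ω))) ∧
    Real.logb 2 3 < 5 / 3 := by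
  intro Vt T X Y
  have hW : ∀ w : Bool × Bool × Bool × (Bool × Bool),
      μ.pr (fun ω => (A ω, Ut ω, σv ω, S ω) = w) = (if w.2.2.1 then (1/48:ℝ) else 1/24) := by
    rintro ⟨a, u, b, s⟩
    rw [pr_congr' μ (E' := fun ω => A ω = a ∧ Ut ω = u ∧ σv ω = b ∧ S ω = s)
      (fun ω => by simp [Prod.ext_iff])]
    rw [hjoint a u b s]
    cases b <;> norm_num
  have key : ∀ {α : Type} [Fintype α] (G : Bool × Bool × Bool × (Bool × Bool) → α) (x : α),
      μ.dist (fun ω => G (A ω, Ut ω, σv ω, S ω)) x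
        = ∑ w : Bool × Bool × Bool × (Bool × Bool),
            if G w = x then (if w.2.2.1 then (1/48:ℝ) else 1/24) else 0 := by
    intro α _ G x
    rw [FinProb.dist, pr_comp' μ (fun ω => (A ω, Ut ω, σv ω, S ω)) (fun w => G w = x)]
    exact Finset.sum_congr rfl fun w _ => by rw [hW w]
  have eUV : μ.H (fun ω => ((A ω, Ut ω), (Vt ω, σv ω))) = 4/3 + Real.logb 2 3 := by
    have h := key gUV
    rw [show (fun ω => ((A ω, Ut ω), (Vt ω, σv ω)))
        = (fun ω => gUV (A ω, Ut ω, σv ω, S ω)) from rfl]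
    unfold FinProb.H
    simp only [h]
    simp only [gUV, gU, gVt, Fintype.sum_prod_type, Fintype.sum_bool]
    norm_num [lb12, lb6]
    ring
  have eY : μ.H Y = 2 := by
    have h := key gY
    rw [show Y = (fun ω => gY (A ω, Ut ω, σv ω, S ω)) from rfl]
    unfold FinProb.H
    simp only [h]
    simp only [gY, gX, gU, gVt, gT, Fintype.sum_prod_type, Fintype.sum_bool]
    norm_num [lb4]
  have eUVY : μ.H (fun ω => (((A ω, Ut ω), (Vt ω, σv ω)), Y ω))
      = 5/3 + Real.logb 2 3 := by
    have h := key (fun w => (gUV w, gY w))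
    rw [show (fun ω => (((A ω, Ut ω), (Vt ω, σv ω)), Y ω))
        = (fun ω => ((fun w => (gUV w, gY w)) (A ω, Ut ω, σv ω, S ω))) from rfl]
    unfold FinProb.H
    simp only [h]
    simp only [gUV, gY, gX, gU, gVt, gT, Fintype.sum_prod_type, Fintype.sum_bool]
    norm_num [lb12, lb6]
    ring
  have eZ : μ.H (fun ω => ((Vt ω, σv ω), T ω)) = 2/3 + Real.logb 2 3 := by
    have h := key gZ
    rw [show (fun ω => ((Vt ω, σv ω), T ω))
        = (fun ω => gZ (A ω, Ut ω, σv ω, S ω)) from rfl]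
    unfold FinProb.H
    simp only [h]
    simp only [gZ, gVt, gT, Fintype.sum_prod_type, Fintype.sum_bool]
    norm_num [lb3, lb12]
    ring
  have eUZ : μ.H (fun ω => ((A ω, Ut ω), (Vt ω, σv ω), T ω))
      = 7/3 + Real.logb 2 3 := by
    have h := key (fun w => (gU w, gZ w))
    rw [show (fun ω => ((A ω, Ut ω), (Vt ω, σv ω), T ω))
        = (fun ω => ((fun w => (gU w, gZ w)) (A ω, Ut ω, σv ω, S ω))) from rfl]
    unfold FinProb.H
    simp only [h]
    simp only [gU, gZ, gVt, gT, Fintype.sum_prod_type, Fintype.sum_bool]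
    norm_num [lb24, lb12]
    ring
  have eXZ : μ.H (fun ω => (X ω, (Vt ω, σv ω), T ω))
      = 7/3 + Real.logb 2 3 := by
    have h := key (fun w => (gX w, gZ w))
    rw [show (fun ω => (X ω, (Vt ω, σv ω), T ω))
        = (fun ω => ((fun w => (gX w, gZ w)) (A ω, Ut ω, σv ω, S ω))) from rfl]
    unfold FinProb.H
    simp only [h]
    simp only [gX, gZ, gVt, gT, Fintype.sum_prod_type, Fintype.sum_bool]
    norm_num [lb24, lb12]
    ring
  have eUXZ : μ.H (fun ω => ((A ω, Ut ω), X ω, (Vt ω, σv ω), T ω))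
      = 7/3 + Real.logb 2 3 := by
    have h := key (fun w => (gU w, gX w, gZ w))
    rw [show (fun ω => ((A ω, Ut ω), X ω, (Vt ω, σv ω), T ω))
        = (fun ω => ((fun w => (gU w, gX w, gZ w)) (A ω, Ut ω, σv ω, S ω))) from rfl]
    unfold FinProb.H
    simp only [h]
    simp only [gU, gX, gZ, gVt, gT, Fintype.sum_prod_type, Fintype.sum_bool]
    norm_num [lb24, lb12]
    ring
  refine ⟨?_, lblt⟩
  rw [le_min_iff]
  constructor
  · rw [FinProb.mi, FinProb.H2, eUV, eY, eUVY]; ring_nf; norm_num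
  · rw [FinProb.cmi, FinProb.H2, FinProb.H2, eUZ, eXZ, eUXZ, eZ]; ring_nf; norm_num
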